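/- Let I ⊂ S = k[x_1,...,x_n] be a homogeneous ideal and In(I) its initial ideal with respect to the reverse lexicographic order with x_1 > ... > x_n. For i ≥ 0 let J_i ⊂ S_i = k[x_1,...,x_{n-i}] be obtained from In(I) by setting x_{n-i+1} = ... = x_n = 0, and let Ĵ_i be obtained from J_i by setting x_{n-i} = 1 (viewed as an ideal of S_i containing J_i). Then for z = x_n,...,x_{n-t} and each i ≤ t, a^i_z(S/I) = c_i(I), where c_i(I) = sup{ r : (Ĵ_i/J_i)_r ≠ 0 }. -/

import Mathlib

open MvPolynomial

noncomputable section

/-- Coercion of a natural number into `WithBot ℕ∞` (degrees, with `⊥ = -∞`, `⊤ = ∞`). -/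
def natW (r : ℕ) : WithBot ℕ∞ := ((r : ℕ∞) : WithBot ℕ∞)

/-- The total degree `|a|` of an exponent vector. -/
def degOf {n : ℕ} (a : Fin n →₀ ℕ) : ℕ := a.sum fun _ e => e

variable {k : Type*} [Field k] {n : ℕ}

/-- The top degree in which the graded pieces of two ideals differ
(`⊥` if they never differ, `⊤` if they differ in unboundedly many degrees). -/
def topDiff (I J : Ideal (MvPolynomial (Fin n) k)) : WithBot ℕ∞ :=
  sSup {x | ∃ r : ℕ, x = natW r ∧
    ¬ ∀ f : MvPolynomial (Fin n) k, f.IsHomogeneous r → (f ∈ I ↔ f ∈ J)}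

/-- `I` is a homogeneous (graded) ideal. -/
def HomogIdeal (I : Ideal (MvPolynomial (Fin n) k)) : Prop :=
  ∀ f ∈ I, ∀ r : ℕ, homogeneousComponent r f ∈ I

/-- The maximal homogeneous ideal `𝔪 = (x₁, …, xₙ)`. -/
def maxIdl (k : Type*) [Field k] (n : ℕ) : Ideal (MvPolynomial (Fin n) k) :=
  Ideal.span (Set.range X)

/-- The ideal `(I, z₁, …, z_i)`. -/
def partIdeal (I : Ideal (MvPolynomial (Fin n) k)) {m : ℕ}
    (z : Fin m → MvPolynomial (Fin n) k) (i : ℕ) : Ideal (MvPolynomial (Fin n) k) :=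
  I ⊔ Ideal.span (z '' {j : Fin m | (j : ℕ) < i})

/-- `a_z^i(S/I) = sup { r : [(I,z₁,…,z_i) : z_{i+1}]_r ≠ (I,z₁,…,z_i)_r }`. -/
def aInv (I : Ideal (MvPolynomial (Fin n) k)) {m : ℕ}
    (z : Fin m → MvPolynomial (Fin n) k) (i : Fin m) : WithBot ℕ∞ :=
  topDiff ((partIdeal I z (i : ℕ)).colon (Ideal.span {z i})) (partIdeal I z (i : ℕ))

/-- `z` is a filter-regular sequence for `S/I`: each `z_{i+1}` avoids every associated
prime of `(I,z₁,…,z_i)` other than the maximal homogeneous ideal. -/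
def FilterRegular (I : Ideal (MvPolynomial (Fin n) k)) {m : ℕ}
    (z : Fin m → MvPolynomial (Fin n) k) : Prop :=
  ∀ i : Fin m, ∀ p : Ideal (MvPolynomial (Fin n) k),
    IsAssociatedPrime p (MvPolynomial (Fin n) k ⧸ partIdeal I z (i : ℕ)) →
    p ≠ maxIdl k n → z i ∉ p

/-- The saturation `⋃_{m ≥ 1} (J : z^m)`. -/
def satIdeal (J : Ideal (MvPolynomial (Fin n) k)) (z : MvPolynomial (Fin n) k) :
    Ideal (MvPolynomial (Fin n) k) :=
  ⨆ m : ℕ, J.colon (Ideal.span {z ^ (m + 1)})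

/-- `a <_drevlex b` for the degree reverse lexicographic order with `x₁ > x₂ > … > xₙ`. -/
def RevLexLT {n : ℕ} (a b : Fin n →₀ ℕ) : Prop :=
  degOf a < degOf b ∨
    (degOf a = degOf b ∧ ∃ j : Fin n, b j < a j ∧ ∀ l : Fin n, j < l → a l = b l)

/-- The initial ideal of `I` with respect to the reverse lexicographic order:
the ideal generated by the leading monomials of the nonzero elements of `I`. -/
def initialIdeal (I : Ideal (MvPolynomial (Fin n) k)) : Ideal (MvPolynomial (Fin n) k) :=
  Ideal.span {g | ∃ f ∈ I, f ≠ 0 ∧ ∃ μ ∈ f.support,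
    (∀ ν ∈ f.support, ν = μ ∨ RevLexLT ν μ) ∧ g = monomial μ (1 : k)}

/-- The evaluation `x_{n-i+1} = ⋯ = x_n = 0`. -/
def evalZero (k : Type*) [Field k] (n i : ℕ) :
    MvPolynomial (Fin n) k →ₐ[k] MvPolynomial (Fin n) k :=
  aeval fun j : Fin n => if (j : ℕ) < n - i then X j else 0

/-- The evaluation `x_{n-i+1} = ⋯ = x_n = 0`, `x_{n-i} = 1`. -/
def evalOne (k : Type*) [Field k] (n i : ℕ) :
    MvPolynomial (Fin n) k →ₐ[k] MvPolynomial (Fin n) k :=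
  aeval fun j : Fin n =>
    if (j : ℕ) < n - i - 1 then X j else if (j : ℕ) = n - i - 1 then 1 else 0

/-- `J_i`: the ideal obtained from `In(I)` by evaluating `x_{n-i+1} = ⋯ = x_n = 0`. -/
def Jlow (i : ℕ) (I : Ideal (MvPolynomial (Fin n) k)) : Ideal (MvPolynomial (Fin n) k) :=
  Ideal.map (evalZero k n i) (initialIdeal I)

/-- `J̃_i`: the ideal obtained from `J_i` by the further evaluation `x_{n-i} = 1`. -/
def Jtil (i : ℕ) (I : Ideal (MvPolynomial (Fin n) k)) : Ideal (MvPolynomial (Fin n) k) :=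
  Ideal.map (evalOne k n i) (initialIdeal I)

/-- `c_i(I) = sup { r : (J̃_i/J_i)_r ≠ 0 }`, computed in `S_i = k[x₁,…,x_{n-i}]`. -/
def cInv (i : ℕ) (I : Ideal (MvPolynomial (Fin n) k)) : WithBot ℕ∞ :=
  sSup {x | ∃ r : ℕ, x = natW r ∧ ∃ f : MvPolynomial (Fin n) k,
    f ∈ Jtil i I ∧ f ∈ supported k {j : Fin n | (j : ℕ) < n - i} ∧
    f.IsHomogeneous r ∧ f ∉ Jlow i I}

/-- `r(I) = sup { r : (S_d/J_d)_r ≠ 0 }`. -/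
def rInv (d : ℕ) (I : Ideal (MvPolynomial (Fin n) k)) : WithBot ℕ∞ :=
  sSup {x | ∃ r : ℕ, x = natW r ∧ ∃ f : MvPolynomial (Fin n) k,
    f ∈ supported k {j : Fin n | (j : ℕ) < n - d} ∧ f.IsHomogeneous r ∧ f ∉ Jlow d I}

/-- The partial regularity `reg_t(S/I)`, via its characterization
`reg_t(S/I) = max_i a_z^i(S/I)` for any filter-regular sequence `z` of `t+1` linear forms
([T1, Proposition 2.2]; equal to `max { aᵢ(S/I) + i : i ≤ t }` in terms of local cohomology). -/
def regT (t : ℕ) (I : Ideal (MvPolynomial (Fin n) k)) : WithBot ℕ∞ :=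
  sSup {x | ∃ z : Fin (t + 1) → MvPolynomial (Fin n) k,
    (∀ j, (z j).IsHomogeneous 1) ∧ FilterRegular I z ∧
    x = ⨆ i : Fin (t + 1), aInv I z i}

/-- The Castelnuovo–Mumford regularity `reg(S/I)`, via its characterization
`reg(S/I) = max { a_z^0, …, a_z^{d-1}, r_z(S/I) }` for any filter-regular sequence `z`
of `d = dim S/I` linear forms ([BS, Theorem 1.10], [T1, Corollary 3.3]). -/
def regCM (I : Ideal (MvPolynomial (Fin n) k)) : WithBot ℕ∞ :=
  sSup {x | ∃ d : ℕ, ringKrullDim (MvPolynomial (Fin n) k ⧸ I) = natW d ∧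
    ∃ z : Fin d → MvPolynomial (Fin n) k,
      (∀ j, (z j).IsHomogeneous 1) ∧ FilterRegular I z ∧
      x = (⨆ i : Fin d, aInv I z i) ⊔ topDiff ⊤ (I ⊔ Ideal.span (Set.range z))}

/-- The exponent vectors of the minimal monomial generators of a monomial ideal. -/
def minGens (I : Ideal (MvPolynomial (Fin n) k)) : Set (Fin n →₀ ℕ) :=
  {μ | monomial μ (1 : k) ∈ I ∧
    ∀ ν : Fin n →₀ ℕ, monomial ν (1 : k) ∈ I → ν ≤ μ → ν = μ}

/-- `E_i`: the exponent vectors of the minimal generators of `In(I)` involving none of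
the variables `x_{n-i+1}, …, x_n`. -/
def Evar (i : ℕ) (I : Ideal (MvPolynomial (Fin n) k)) : Set (Fin n →₀ ℕ) :=
  {μ ∈ minGens (initialIdeal I) | ∀ j : Fin n, n - i ≤ (j : ℕ) → μ j = 0}

/-- The set `F` of corners of the staircase determined by `E`:
vectors `a = max(v₁,…,v_s) - (1,…,1)` where `v j ∈ E`, the `j`-th coordinate of `v j`
strictly exceeds that of `v h` for `h ≠ j`, and `a ≱ w` for all `w ∈ E`. -/
def corners {s : ℕ} (E : Set (Fin s →₀ ℕ)) : Set (Fin s →₀ ℕ) :=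
  {a | (∃ v : Fin s → (Fin s →₀ ℕ), (∀ j, v j ∈ E) ∧
      (∀ j h : Fin s, h ≠ j → v h j < v j j) ∧
      ∀ l : Fin s, a l + 1 = Finset.univ.sup fun j => v j l) ∧
    ∀ w ∈ E, ¬ w ≤ a}

namespace Stmt3Aux

variable {n : ℕ}

lemma degOf_degree (a : Fin n →₀ ℕ) : degOf a = a.degree := rfl

lemma degOf_add (a b : Fin n →₀ ℕ) : degOf (a + b) = degOf a + degOf b := by
  simp only [degOf_degree, Finsupp.degree_eq_weight_one, map_add]

lemma degOf_single (l : Fin n) (m : ℕ) : degOf (Finsupp.single l m) = m := by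
  classical
  rcases eq_or_ne m 0 with rfl | hm
  · simp [degOf_degree, Finsupp.degree]
  · rw [degOf_degree, Finsupp.degree_single]

lemma exists_max_diff {a b : Fin n →₀ ℕ} (h : a ≠ b) :
    ∃ j : Fin n, a j ≠ b j ∧ ∀ l : Fin n, j < l → a l = b l := by
  classical
  set D := Finset.univ.filter fun l : Fin n => a l ≠ b l with hD
  have hne : D.Nonempty := by
    by_contra hc
    apply h
    ext l
    by_contra hl
    exact hc ⟨l, by simp [hD, hl]⟩
  refine ⟨D.max' hne, ?_, ?_⟩
  · have := D.max'_mem hne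
    simpa [hD] using this
  · intro l hl
    by_contra hne2
    have hmem : l ∈ D := by simp [hD, hne2]
    exact absurd (D.le_max' l hmem) (not_le.mpr hl)

lemma revLex_total {a b : Fin n →₀ ℕ} (h : a ≠ b) : RevLexLT a b ∨ RevLexLT b a := by
  rcases lt_trichotomy (degOf a) (degOf b) with hd | hd | hd
  · exact Or.inl (Or.inl hd)
  · obtain ⟨j, hj, hmax⟩ := exists_max_diff h
    rcases lt_or_gt_of_ne hj with hlt | hgt
    · exact Or.inr (Or.inr ⟨hd.symm, j, hlt, fun l hl => (hmax l hl).symm⟩)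
    · exact Or.inl (Or.inr ⟨hd, j, hgt, hmax⟩)
  · exact Or.inr (Or.inl hd)

lemma revLex_irrefl (a : Fin n →₀ ℕ) : ¬ RevLexLT a a := by
  rintro (h | ⟨-, j, hj, -⟩)
  · exact lt_irrefl _ h
  · exact lt_irrefl _ hj

lemma revLex_trans {a b c : Fin n →₀ ℕ} (h1 : RevLexLT a b) (h2 : RevLexLT b c) :
    RevLexLT a c := by
  rcases h1 with h1 | ⟨e1, j1, hj1, ht1⟩
  · rcases h2 with h2 | ⟨e2, -⟩
    · exact Or.inl (h1.trans h2)
    · exact Or.inl (e2 ▸ h1)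
  · rcases h2 with h2 | ⟨e2, j2, hj2, ht2⟩
    · exact Or.inl (e1 ▸ h2)
    · refine Or.inr ⟨e1.trans e2, ?_⟩
      rcases lt_trichotomy j1 j2 with h | h | h
      · refine ⟨j2, ?_, fun l hl => (ht1 l (h.trans hl)).trans (ht2 l hl)⟩
        have := ht1 j2 h
        omega
      · subst h
        exact ⟨j1, hj2.trans hj1, fun l hl => (ht1 l hl).trans (ht2 l hl)⟩
      · refine ⟨j1, ?_, fun l hl => (ht1 l hl).trans (ht2 l (h.trans hl))⟩
        have := ht2 j1 h
        omega

lemma revLex_asymm {a b : Fin n →₀ ℕ} (h : RevLexLT a b) : ¬ RevLexLT b a :=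
  fun h' => revLex_irrefl a (revLex_trans h h')

lemma revLex_add_left {a b : Fin n →₀ ℕ} (c : Fin n →₀ ℕ) (h : RevLexLT a b) :
    RevLexLT (c + a) (c + b) := by
  rcases h with h | ⟨e, j, hj, ht⟩
  · exact Or.inl (by simpa [degOf_add] using Nat.add_lt_add_left h (degOf c))
  · refine Or.inr ⟨by simp [degOf_add, e], j, ?_, fun l hl => by simp [ht l hl]⟩
    simpa using Nat.add_lt_add_left hj (c j)

lemma revLex_of_add_left {a b : Fin n →₀ ℕ} (c : Fin n →₀ ℕ)
    (h : RevLexLT (c + a) (c + b)) : RevLexLT a b := by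
  rcases h with h | ⟨e, j, hj, ht⟩
  · refine Or.inl ?_
    rw [degOf_add, degOf_add] at h
    omega
  · refine Or.inr ⟨by rw [degOf_add, degOf_add] at e; omega, j, ?_, fun l hl => ?_⟩
    · have := hj
      simp only [Finsupp.add_apply] at this
      omega
    · have := ht l hl
      simp only [Finsupp.add_apply] at this
      omega

lemma revLex_preds_finite (a : Fin n →₀ ℕ) : {b : Fin n →₀ ℕ | RevLexLT b a}.Finite := by
  apply Set.Finite.subset (Finsupp.finite_of_degree_le (degOf a))
  rintro b (h | ⟨e, -⟩)
  · exact le_of_lt (by simpa [degOf_degree] using h)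
  · simp only [Set.mem_setOf_eq, ← degOf_degree]
    omega

lemma revLex_wf : WellFounded (RevLexLT (n := n)) := by
  have key : ∀ a b : Fin n →₀ ℕ, RevLexLT b a →
      {c | RevLexLT c b}.ncard < {c | RevLexLT c a}.ncard := by
    intro a b hba
    apply Set.ncard_lt_ncard _ (revLex_preds_finite a)
    rw [Set.ssubset_iff_subset_ne]
    constructor
    · intro c hc
      exact revLex_trans hc hba
    · intro hEq
      have : b ∈ {c | RevLexLT c b} := by rw [hEq]; exact hba
      exact revLex_irrefl b this
  constructor
  intro a
  generalize hm : {c | RevLexLT c a}.ncard = m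
  induction m using Nat.strong_induction_on generalizing a with
  | _ m ih =>
    constructor
    intro b hb
    exact ih _ (hm ▸ key a b hb) b rfl

lemma finset_exists_revlex_max {s : Finset (Fin n →₀ ℕ)} (hs : s.Nonempty) :
    ∃ μ ∈ s, ∀ ν ∈ s, ν = μ ∨ RevLexLT ν μ := by
  classical
  induction s using Finset.induction_on with
  | empty => simp at hs
  | @insert a s ha ih =>
    rcases s.eq_empty_or_nonempty with rfl | hs'
    · exact ⟨a, by simp, by simp⟩
    · obtain ⟨μ, hμs, hμ⟩ := ih hs'
      by_cases hcmp : a = μ ∨ RevLexLT a μ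
      · refine ⟨μ, Finset.mem_insert_of_mem hμs, ?_⟩
        intro ν hν
        rcases Finset.mem_insert.mp hν with rfl | hν'
        · exact hcmp
        · exact hμ ν hν'
      · push_neg at hcmp
        have hlt : RevLexLT μ a := (revLex_total (Ne.symm hcmp.1)).resolve_right hcmp.2
        refine ⟨a, Finset.mem_insert_self a s, ?_⟩
        intro ν hν
        rcases Finset.mem_insert.mp hν with rfl | hν'
        · exact Or.inl rfl
        · rcases hμ ν hν' with rfl | h'
          · exact Or.inr hlt
          · exact Or.inr (revLex_trans h' hlt)

lemma revLex_big_small {s : ℕ} {μ ν : Fin n →₀ ℕ} (hdeg : degOf ν = degOf μ)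
    (hμ : ∀ l : Fin n, s ≤ (l : ℕ) → μ l = 0)
    (hν : ∃ l : Fin n, s ≤ (l : ℕ) ∧ ν l ≠ 0) : RevLexLT ν μ := by
  obtain ⟨l0, hl0, hνl0⟩ := hν
  have hne : ν ≠ μ := fun h => hνl0 (h ▸ hμ l0 hl0)
  obtain ⟨j, hj, hmax⟩ := exists_max_diff hne
  refine Or.inr ⟨hdeg, j, ?_, hmax⟩
  by_cases hjs : s ≤ (j : ℕ)
  · have := hμ j hjs
    omega
  · exfalso
    have hjl : j < l0 := by
      rw [Fin.lt_def]
      omega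
    exact hνl0 ((hmax l0 hjl).trans (hμ l0 hl0))

end Stmt3Aux

namespace Stmt3Aux

variable {k : Type*} [Field k] {n : ℕ}

/-- `μ` is the revlex-leading monomial of `f`. -/
def IsLM (f : MvPolynomial (Fin n) k) (μ : Fin n →₀ ℕ) : Prop :=
  μ ∈ f.support ∧ ∀ ν ∈ f.support, ν = μ ∨ RevLexLT ν μ

lemma exists_isLM {f : MvPolynomial (Fin n) k} (hf : f ≠ 0) : ∃ μ, IsLM f μ := by
  have : f.support.Nonempty := Finset.nonempty_iff_ne_empty.mpr
    (fun h => hf (MvPolynomial.support_eq_empty.mp h))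
  obtain ⟨μ, hμ, h⟩ := finset_exists_revlex_max this
  exact ⟨μ, hμ, h⟩

lemma isLM_coeff_ne_zero {f : MvPolynomial (Fin n) k} {μ} (h : IsLM f μ) :
    MvPolynomial.coeff μ f ≠ 0 :=
  MvPolynomial.mem_support_iff.mp h.1

lemma isLM_monomial_mul {f : MvPolynomial (Fin n) k} {μ : Fin n →₀ ℕ} (δ : Fin n →₀ ℕ)
    (h : IsLM f μ) : IsLM (monomial δ (1 : k) * f) (δ + μ) := by
  classical
  constructor
  · rw [MvPolynomial.mem_support_iff, MvPolynomial.coeff_monomial_mul, one_mul]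
    exact isLM_coeff_ne_zero h
  · intro ν hν
    have hsub := MvPolynomial.support_mul (monomial δ (1 : k)) f hν
    rw [MvPolynomial.support_monomial] at hsub
    simp only [one_ne_zero, if_false] at hsub
    obtain ⟨d, hd, ν₀, hν₀, rfl⟩ := Finset.mem_add.mp hsub
    rw [Finset.mem_singleton] at hd
    subst hd
    rcases h.2 ν₀ hν₀ with rfl | hlt
    · exact Or.inl rfl
    · exact Or.inr (revLex_add_left d hlt)

lemma isHomog_iff {f : MvPolynomial (Fin n) k} {r : ℕ} :
    f.IsHomogeneous r ↔ ∀ ν ∈ f.support, degOf ν = r := by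
  constructor
  · intro h ν hν
    have := h (MvPolynomial.mem_support_iff.mp hν)
    rw [degOf_degree, Finsupp.degree_eq_weight_one]
    exact this
  · intro h d hd
    have := h d (MvPolynomial.mem_support_iff.mpr hd)
    rw [degOf_degree, Finsupp.degree_eq_weight_one] at this
    exact this

lemma homog_sub {f g : MvPolynomial (Fin n) k} {r : ℕ}
    (hf : f.IsHomogeneous r) (hg : g.IsHomogeneous r) : (f - g).IsHomogeneous r :=
  (MvPolynomial.homogeneousSubmodule (Fin n) k r).sub_mem hf hg

/-- The set of leading monomials of nonzero elements of `I`. -/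
def LMset (I : Ideal (MvPolynomial (Fin n) k)) : Set (Fin n →₀ ℕ) :=
  {μ | ∃ f ∈ I, f ≠ 0 ∧ IsLM f μ}

lemma initialIdeal_eq (I : Ideal (MvPolynomial (Fin n) k)) :
    initialIdeal I = Ideal.span ((fun μ => monomial μ (1 : k)) '' LMset I) := by
  unfold initialIdeal
  congr 1
  ext g
  constructor
  · rintro ⟨f, hfI, hf0, μ, hμ, hmax, rfl⟩
    exact ⟨μ, ⟨f, hfI, hf0, hμ, hmax⟩, rfl⟩
  · rintro ⟨μ, ⟨f, hfI, hf0, hμ, hmax⟩, rfl⟩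
    exact ⟨f, hfI, hf0, μ, hμ, hmax, rfl⟩

lemma mem_initialIdeal_iff {I : Ideal (MvPolynomial (Fin n) k)} {f : MvPolynomial (Fin n) k} :
    f ∈ initialIdeal I ↔ ∀ ν ∈ f.support, ∃ γ ∈ LMset I, γ ≤ ν := by
  rw [initialIdeal_eq]
  exact MvPolynomial.mem_ideal_span_monomial_image

lemma LMset_homog_rep {I : Ideal (MvPolynomial (Fin n) k)} (hI : HomogIdeal I)
    {γ μ : Fin n →₀ ℕ} (hγ : γ ∈ LMset I) (hle : γ ≤ μ) :
    ∃ g ∈ I, g.IsHomogeneous (degOf μ) ∧ IsLM g μ ∧ g ≠ 0 := by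
  obtain ⟨f, hfI, hf0, hlm⟩ := hγ
  set h := MvPolynomial.homogeneousComponent (degOf γ) f with hh
  have hsupp : h.support ⊆ f.support := by
    intro d hd
    rw [MvPolynomial.mem_support_iff] at hd ⊢
    intro h0
    apply hd
    rw [hh, MvPolynomial.coeff_homogeneousComponent, h0, ite_self]
  have hγh : MvPolynomial.coeff γ h = MvPolynomial.coeff γ f := by
    rw [hh, MvPolynomial.coeff_homogeneousComponent, if_pos (degOf_degree γ).symm]
  have hhI : h ∈ I := hI f hfI _
  have hhlm : IsLM h γ := by
    constructor
    · rw [MvPolynomial.mem_support_iff, hγh]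
      exact isLM_coeff_ne_zero hlm
    · exact fun ν hν => hlm.2 ν (hsupp hν)
  have hh0 : h ≠ 0 := fun h0 => by
    have := hhlm.1
    rw [h0] at this
    simp at this
  have hhhom : h.IsHomogeneous (degOf γ) := MvPolynomial.homogeneousComponent_isHomogeneous _ f
  refine ⟨monomial (μ - γ) (1 : k) * h, Ideal.mul_mem_left _ _ hhI, ?_, ?_, ?_⟩
  · have := (MvPolynomial.isHomogeneous_monomial (1 : k)
      (rfl : (μ - γ).degree = degOf (μ - γ))).mul hhhom
    have heq : degOf ((μ - γ) + γ) = degOf (μ - γ) + degOf γ := degOf_add _ _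
    rw [tsub_add_cancel_of_le hle] at heq
    exact heq ▸ this
  · have := isLM_monomial_mul (μ - γ) hhlm
    rwa [tsub_add_cancel_of_le hle] at this
  · intro h0
    have := (isLM_monomial_mul (μ - γ) hhlm).1
    rw [h0] at this
    simp at this

end Stmt3Aux

namespace Stmt3Aux

variable {k : Type*} [Field k] {n : ℕ}

/-- The ideal generated by the variables of index `≥ s`. -/
def Vspan (k : Type*) [Field k] (n s : ℕ) : Ideal (MvPolynomial (Fin n) k) :=
  Ideal.span ((fun l => (X l : MvPolynomial (Fin n) k)) '' {l : Fin n | s ≤ (l : ℕ)})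

/-- Leading monomials of `I` together with the big variables. -/
def Qset (I : Ideal (MvPolynomial (Fin n) k)) (s : ℕ) : Set (Fin n →₀ ℕ) :=
  LMset I ∪ (fun l : Fin n => Finsupp.single l 1) '' {l : Fin n | s ≤ (l : ℕ)}

lemma Vspan_eq (s : ℕ) : Vspan k n s = Ideal.span ((fun μ => monomial μ (1 : k)) ''
    ((fun l : Fin n => Finsupp.single l 1) '' {l : Fin n | s ≤ (l : ℕ)})) := by
  unfold Vspan
  rw [Set.image_image]
  rfl

lemma mem_Vspan_iff {s : ℕ} {f : MvPolynomial (Fin n) k} :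
    f ∈ Vspan k n s ↔ ∀ ν ∈ f.support, ∃ l : Fin n, s ≤ (l : ℕ) ∧ ν l ≠ 0 := by
  rw [Vspan_eq, MvPolynomial.mem_ideal_span_monomial_image]
  apply forall₂_congr
  intro ν _
  constructor
  · rintro ⟨si, ⟨l, hl, rfl⟩, hle⟩
    exact ⟨l, hl, by simpa [Nat.one_le_iff_ne_zero] using Finsupp.single_le_iff.mp hle⟩
  · rintro ⟨l, hl, hν⟩
    exact ⟨Finsupp.single l 1, ⟨l, hl, rfl⟩,
      Finsupp.single_le_iff.mpr (Nat.one_le_iff_ne_zero.mpr hν)⟩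

lemma QI_eq (I : Ideal (MvPolynomial (Fin n) k)) (s : ℕ) :
    initialIdeal I ⊔ Vspan k n s
      = Ideal.span ((fun μ => monomial μ (1 : k)) '' Qset I s) := by
  rw [initialIdeal_eq, Vspan_eq, ← Ideal.span_union, ← Set.image_union]
  rfl

lemma mem_QI_iff {I : Ideal (MvPolynomial (Fin n) k)} {s : ℕ} {f : MvPolynomial (Fin n) k} :
    f ∈ initialIdeal I ⊔ Vspan k n s ↔ ∀ ν ∈ f.support, ∃ γ ∈ Qset I s, γ ≤ ν := by
  rw [QI_eq]
  exact MvPolynomial.mem_ideal_span_monomial_image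

lemma support_homogComp_subset (r : ℕ) (f : MvPolynomial (Fin n) k) :
    (MvPolynomial.homogeneousComponent r f).support ⊆ f.support := by
  intro d hd
  rw [MvPolynomial.mem_support_iff] at hd ⊢
  intro h0
  apply hd
  rw [MvPolynomial.coeff_homogeneousComponent, h0, ite_self]

lemma homogComp_self {f : MvPolynomial (Fin n) k} {r : ℕ} (hf : f.IsHomogeneous r) :
    MvPolynomial.homogeneousComponent r f = f := by
  have := MvPolynomial.homogeneousComponent_of_mem
    (MvPolynomial.mem_homogeneousSubmodule r f |>.mpr hf) (m := r)
  simpa using this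

/-- The leading monomial of a nonzero homogeneous element of `I ⊔ V` is divisible by an
element of `Qset`. -/
lemma LM_mem_Q {I : Ideal (MvPolynomial (Fin n) k)} (hI : HomogIdeal I) {s : ℕ}
    {g : MvPolynomial (Fin n) k} {μ : Fin n →₀ ℕ} {r : ℕ}
    (hg : g ∈ I ⊔ Vspan k n s) (hhom : g.IsHomogeneous r) (hlm : IsLM g μ) :
    ∃ γ ∈ Qset I s, γ ≤ μ := by
  classical
  by_cases hbig : ∃ l : Fin n, s ≤ (l : ℕ) ∧ μ l ≠ 0
  · obtain ⟨l, hl, hμl⟩ := hbig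
    exact ⟨Finsupp.single l 1, Or.inr ⟨l, hl, rfl⟩,
      Finsupp.single_le_iff.mpr (Nat.one_le_iff_ne_zero.mpr hμl)⟩
  push_neg at hbig
  obtain ⟨a, haI, b, hbV, hab⟩ := Submodule.mem_sup.mp hg
  set ar := MvPolynomial.homogeneousComponent r a with har
  set br := MvPolynomial.homogeneousComponent r b with hbr
  have harI : ar ∈ I := hI a haI r
  have hbrV : br ∈ Vspan k n s := by
    rw [mem_Vspan_iff] at hbV ⊢
    exact fun ν hν => hbV ν (support_homogComp_subset r b hν)
  have hg2 : g = ar + br := by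
    have h1 : MvPolynomial.homogeneousComponent r g = g := homogComp_self hhom
    rw [← hab, map_add] at h1
    rw [har, hbr, h1, hab]
  have hbrcoeff : MvPolynomial.coeff μ br = 0 := by
    by_contra hc
    obtain ⟨l, hl, hνl⟩ := mem_Vspan_iff.mp hbrV μ (MvPolynomial.mem_support_iff.mpr hc)
    exact hνl (hbig l hl)
  have harcoeff : MvPolynomial.coeff μ ar ≠ 0 := by
    intro hc
    apply isLM_coeff_ne_zero hlm
    rw [hg2, MvPolynomial.coeff_add, hc, hbrcoeff, add_zero]
  have harlm : IsLM ar μ := by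
    refine ⟨MvPolynomial.mem_support_iff.mpr harcoeff, ?_⟩
    intro ν hν
    have hνg : ν ∈ g.support ∪ br.support := by
      have : ar = g - br := by rw [hg2]; ring
      have := MvPolynomial.support_sub (σ := Fin n) g br (by rw [← this]; exact hν)
      exact this
    rcases Finset.mem_union.mp hνg with hνg | hνbr
    · exact hlm.2 ν hνg
    · refine Or.inr (revLex_big_small ?_ hbig ?_)
      · have h1 : degOf ν = r := isHomog_iff.mp
          (MvPolynomial.homogeneousComponent_isHomogeneous r b) ν hνbr
        have h2 : degOf μ = r := isHomog_iff.mp hhom μ hlm.1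
        rw [h1, h2]
      · exact mem_Vspan_iff.mp hbrV ν hνbr
  have har0 : ar ≠ 0 := fun h0 => harcoeff (by rw [h0]; simp)
  exact ⟨μ, Or.inl ⟨ar, harI, har0, harlm⟩, le_refl μ⟩

/-- Conversely, any multiple of an element of `Qset` is the leading monomial of a
homogeneous element of `I ⊔ V`. -/
lemma Q_rep {I : Ideal (MvPolynomial (Fin n) k)} (hI : HomogIdeal I) {s : ℕ}
    {γ μ : Fin n →₀ ℕ} (hγ : γ ∈ Qset I s) (hle : γ ≤ μ) :
    ∃ g ∈ I ⊔ Vspan k n s, g.IsHomogeneous (degOf μ) ∧ IsLM g μ ∧ g ≠ 0 := by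
  classical
  rcases hγ with hγ | ⟨l, hl, rfl⟩
  · obtain ⟨g, hgI, hhom, hlm, hne⟩ := LMset_homog_rep hI hγ hle
    exact ⟨g, Ideal.mem_sup_left hgI, hhom, hlm, hne⟩
  · refine ⟨monomial μ (1 : k), Ideal.mem_sup_right ?_, ?_, ?_, ?_⟩
    · rw [mem_Vspan_iff]
      intro ν hν
      rw [MvPolynomial.support_monomial, if_neg (one_ne_zero (α := k))] at hν
      rw [Finset.mem_singleton] at hν
      subst hν
      refine ⟨l, hl, ?_⟩
      have := Finsupp.single_le_iff.mp hle
      omega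
    · exact MvPolynomial.isHomogeneous_monomial _ rfl
    · constructor
      · rw [MvPolynomial.mem_support_iff, MvPolynomial.coeff_monomial, if_pos rfl]
        exact one_ne_zero
      · intro ν hν
        rw [MvPolynomial.support_monomial, if_neg (one_ne_zero (α := k))] at hν
        exact Or.inl (Finset.mem_singleton.mp hν)
    · intro h0
      have := MvPolynomial.coeff_monomial μ μ (1 : k)
      rw [h0, if_pos rfl] at this
      simp at this

end Stmt3Aux

namespace Stmt3Aux

variable {k : Type*} [Field k] {n : ℕ}

lemma revLex_ind {C : (Fin n →₀ ℕ) → Prop}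
    (h : ∀ x, (∀ y, RevLexLT y x → C y) → C x) : ∀ x, C x :=
  fun x => (revLex_wf (n := n)).induction x h

lemma reduce {I : Ideal (MvPolynomial (Fin n) k)} (hI : HomogIdeal I) {s r : ℕ}
    (f : MvPolynomial (Fin n) k) (hf : f.IsHomogeneous r) :
    ∃ f', f - f' ∈ I ⊔ Vspan k n s ∧ f'.IsHomogeneous r ∧
      ∀ ν ∈ f'.support, ¬ ∃ γ ∈ Qset I s, γ ≤ ν := by
  classical
  let bads : MvPolynomial (Fin n) k → Finset (Fin n →₀ ℕ) :=
    fun f => f.support.filter (fun ν => ∃ γ ∈ Qset I s, γ ≤ ν)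
  suffices H : ∀ μ₀ : Fin n →₀ ℕ, ∀ f : MvPolynomial (Fin n) k, f.IsHomogeneous r →
      (∀ ν ∈ bads f, ν = μ₀ ∨ RevLexLT ν μ₀) →
      ∃ f', f - f' ∈ I ⊔ Vspan k n s ∧ f'.IsHomogeneous r ∧
        ∀ ν ∈ f'.support, ¬ ∃ γ ∈ Qset I s, γ ≤ ν by
    rcases (bads f).eq_empty_or_nonempty with he | hne
    · refine ⟨f, by simp, hf, ?_⟩
      intro ν hν hbad
      have hmem : ν ∈ bads f := Finset.mem_filter.mpr ⟨hν, hbad⟩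
      rw [he] at hmem
      simp at hmem
    · obtain ⟨μ₀, hμ₀mem, hμ₀⟩ := finset_exists_revlex_max hne
      exact H μ₀ f hf hμ₀
  refine revLex_ind (fun μ₀ ih => ?_)
  intro f hfhom hbound
  rcases (bads f).eq_empty_or_nonempty with he | hne
  · refine ⟨f, by simp, hfhom, ?_⟩
    intro ν hν hbad
    have hmem : ν ∈ bads f := Finset.mem_filter.mpr ⟨hν, hbad⟩
    rw [he] at hmem
    simp at hmem
  · obtain ⟨β₀, hβmem, hβmax⟩ := finset_exists_revlex_max hne
    obtain ⟨hβsupp, hβbad⟩ := Finset.mem_filter.mp hβmem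
    obtain ⟨γ, hγQ, hγle⟩ := hβbad
    obtain ⟨g, hgP, hghom, hglm, hg0⟩ := Q_rep hI hγQ hγle
    have hdegβ : degOf β₀ = r := isHomog_iff.mp hfhom β₀ hβsupp
    rw [hdegβ] at hghom
    set c := MvPolynomial.coeff β₀ f / MvPolynomial.coeff β₀ g with hc
    set f₂ := f - MvPolynomial.C c * g with hf₂
    have hf₂hom : f₂.IsHomogeneous r := homog_sub hfhom (hghom.C_mul c)
    have hcoeffβ : MvPolynomial.coeff β₀ f₂ = 0 := by
      rw [hf₂, MvPolynomial.coeff_sub, MvPolynomial.coeff_C_mul, hc,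
        div_mul_cancel₀ _ (isLM_coeff_ne_zero hglm), sub_self]
    have hsupp₂ : ∀ ν ∈ f₂.support, ν ∈ f.support ∨ ν ∈ g.support := by
      intro ν hν
      have h2 := MvPolynomial.support_sub (σ := Fin n) f (MvPolynomial.C c * g) (hf₂ ▸ hν)
      rcases Finset.mem_union.mp h2 with h | h
      · exact Or.inl h
      · right
        have hsub : (MvPolynomial.C c * g).support ⊆ g.support := by
          intro d hd
          rw [MvPolynomial.mem_support_iff, MvPolynomial.coeff_C_mul] at hd
          rw [MvPolynomial.mem_support_iff]
          intro h0
          rw [h0, mul_zero] at hd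
          exact hd rfl
        exact hsub h
    have hbound₂ : ∀ ν ∈ bads f₂, RevLexLT ν β₀ := by
      intro ν hν
      obtain ⟨hνsupp, hνbad⟩ := Finset.mem_filter.mp hν
      have hνβ : ν ≠ β₀ := by
        intro h
        subst h
        exact (MvPolynomial.mem_support_iff.mp hνsupp) hcoeffβ
      rcases hsupp₂ ν hνsupp with h | h
      · exact (hβmax ν (Finset.mem_filter.mpr ⟨h, hνbad⟩)).resolve_left hνβ
      · exact (hglm.2 ν h).resolve_left hνβ
    have hff₂P : f - f₂ ∈ I ⊔ Vspan k n s := by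
      rw [hf₂]
      simp only [sub_sub_cancel]
      exact Ideal.mul_mem_left _ _ hgP
    rcases (bads f₂).eq_empty_or_nonempty with he₂ | hne₂
    · refine ⟨f₂, hff₂P, hf₂hom, ?_⟩
      intro ν hν hbad
      have hmem : ν ∈ bads f₂ := Finset.mem_filter.mpr ⟨hν, hbad⟩
      rw [he₂] at hmem
      simp at hmem
    · obtain ⟨β₁, hβ₁mem, hβ₁max⟩ := finset_exists_revlex_max hne₂
      have hβ₁β₀ : RevLexLT β₁ β₀ := hbound₂ β₁ hβ₁mem
      have hβ₁μ₀ : RevLexLT β₁ μ₀ := by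
        rcases hbound β₀ hβmem with h | h
        · exact h ▸ hβ₁β₀
        · exact revLex_trans hβ₁β₀ h
      obtain ⟨f', hf'P, hf'hom, hf'free⟩ := ih β₁ hβ₁μ₀ f₂ hf₂hom
        (fun ν hν => hβ₁max ν hν)
      refine ⟨f', ?_, hf'hom, hf'free⟩
      have heq : f - f' = (f - f₂) + (f₂ - f') := by ring
      rw [heq]
      exact Ideal.add_mem _ hff₂P hf'P

lemma nf_zero {I : Ideal (MvPolynomial (Fin n) k)} (hI : HomogIdeal I) {s r : ℕ}
    {g : MvPolynomial (Fin n) k} (hg : g ∈ I ⊔ Vspan k n s) (hhom : g.IsHomogeneous r)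
    (hfree : ∀ ν ∈ g.support, ¬ ∃ γ ∈ Qset I s, γ ≤ ν) : g = 0 := by
  by_contra h0
  obtain ⟨μ, hlm⟩ := exists_isLM h0
  exact hfree μ hlm.1 (LM_mem_Q hI hg hhom hlm)

end Stmt3Aux

namespace Stmt3Aux

variable {k : Type*} [Field k] {n : ℕ}

lemma X_eq_mono (l : Fin n) : (X l : MvPolynomial (Fin n) k) = monomial (Finsupp.single l 1) 1 :=
  rfl

lemma coeff_sum_monomial {S : Finset (Fin n →₀ ℕ)} {f : MvPolynomial (Fin n) k}
    {ν : Fin n →₀ ℕ} :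
    MvPolynomial.coeff ν (∑ m ∈ S, monomial m (MvPolynomial.coeff m f))
      = if ν ∈ S then MvPolynomial.coeff ν f else 0 := by
  classical
  rw [MvPolynomial.coeff_sum]
  rw [show (∑ m ∈ S, MvPolynomial.coeff ν (monomial m (MvPolynomial.coeff m f)))
      = ∑ m ∈ S, if m = ν then MvPolynomial.coeff m f else 0 from
    Finset.sum_congr rfl fun m _ => MvPolynomial.coeff_monomial ν m _]
  exact Finset.sum_ite_eq' S ν _

lemma idx_pos_of_not_big {s : ℕ} {idx : Fin n} (hidx : (idx : ℕ) + 1 = s)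
    {xμ ν : Fin n →₀ ℕ} (hdeg : degOf ν = degOf xμ)
    (hxsmall : ∀ l : Fin n, s ≤ (l : ℕ) → xμ l = 0) (hxidx : xμ idx ≠ 0)
    (hν : ν = xμ ∨ RevLexLT ν xμ)
    (hνsmall : ¬ ∃ l : Fin n, s ≤ (l : ℕ) ∧ ν l ≠ 0) : ν idx ≠ 0 := by
  push_neg at hνsmall
  rcases hν with rfl | hν
  · exact hxidx
  rcases hν with hlt | ⟨-, j, hj, ht⟩
  · rw [hdeg] at hlt
    exact absurd hlt (lt_irrefl _)
  intro hν0
  rcases lt_trichotomy j idx with h | h | h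
  · have := ht idx h
    rw [hν0] at this
    exact hxidx this.symm
  · subst h
    rw [hν0] at hj
    exact Nat.not_lt_zero _ hj
  · have hjs : s ≤ (j : ℕ) := by
      rw [Fin.lt_def] at h
      omega
    have h1 := hνsmall j hjs
    have h2 := hxsmall j hjs
    rw [h1, h2] at hj
    exact lt_irrefl _ hj

/-- The main equivalence between the colon condition on `I ⊔ V` and the monomial
condition on `Qset`: Bayer–Stillman's lemma for the reverse lexicographic order. -/
lemma phi_iff_M {I : Ideal (MvPolynomial (Fin n) k)} (hI : HomogIdeal I)
    {idx : Fin n} {s : ℕ} (hidx : (idx : ℕ) + 1 = s) (r : ℕ) :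
    (∃ f : MvPolynomial (Fin n) k, f.IsHomogeneous r ∧
        f ∈ (I ⊔ Vspan k n s).colon (Ideal.span {(X idx : MvPolynomial (Fin n) k)}) ∧
        f ∉ I ⊔ Vspan k n s)
      ↔ (∃ μ : Fin n →₀ ℕ, degOf μ = r ∧
          (∃ γ ∈ Qset I s, γ ≤ μ + Finsupp.single idx 1) ∧ ¬ ∃ γ ∈ Qset I s, γ ≤ μ) := by
  classical
  set P := I ⊔ Vspan k n s with hP
  have hPle : P ≤ P.colon (Ideal.span {(X idx : MvPolynomial (Fin n) k)}) := by
    intro p hp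
    rw [← Ideal.submodule_span_eq, Submodule.mem_colon_span_singleton, smul_eq_mul]
    exact Ideal.mul_mem_right _ _ hp
  constructor
  · rintro ⟨f, hfhom, hfcolon, hfP⟩
    obtain ⟨f', hff', hf'hom, hf'free⟩ := reduce (s := s) hI f hfhom
    have hf'P : f' ∉ P := fun h => hfP (by
      have : f = (f - f') + f' := by ring
      rw [this]
      exact Ideal.add_mem _ hff' h)
    have hf'0 : f' ≠ 0 := fun h => hf'P (by rw [h]; exact Submodule.zero_mem _)
    have hf'colon : f' ∈ P.colon (Ideal.span {(X idx : MvPolynomial (Fin n) k)}) := by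
      have : f' = f - (f - f') := by ring
      rw [this]
      exact Submodule.sub_mem _ hfcolon (hPle hff')
    have hxf'P : (X idx : MvPolynomial (Fin n) k) * f' ∈ P := by
      rw [← Ideal.submodule_span_eq] at hf'colon
      have := Submodule.mem_colon_span_singleton.mp hf'colon
      rwa [smul_eq_mul, mul_comm] at this
    obtain ⟨μ, hlm⟩ := exists_isLM hf'0
    have hxlm : IsLM ((X idx : MvPolynomial (Fin n) k) * f') (Finsupp.single idx 1 + μ) := by
      rw [X_eq_mono]
      exact isLM_monomial_mul _ hlm
    have hxhom : ((X idx : MvPolynomial (Fin n) k) * f').IsHomogeneous (1 + r) :=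
      (MvPolynomial.isHomogeneous_X k idx).mul hf'hom
    obtain ⟨γ, hγQ, hγle⟩ := LM_mem_Q hI hxf'P hxhom hxlm
    refine ⟨μ, isHomog_iff.mp hf'hom μ hlm.1, ⟨γ, hγQ, ?_⟩, hf'free μ hlm.1⟩
    rwa [add_comm] at hγle
  · rintro ⟨μ, hdegμ, ⟨γ, hγQ, hγle⟩, hμfree⟩
    have hμsmall : ∀ l : Fin n, s ≤ (l : ℕ) → μ l = 0 := by
      intro l hl
      by_contra h0
      exact hμfree ⟨Finsupp.single l 1, Or.inr ⟨l, hl, rfl⟩,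
        Finsupp.single_le_iff.mpr (Nat.one_le_iff_ne_zero.mpr h0)⟩
    set xμ := μ + Finsupp.single idx 1 with hxμ
    have hxμsmall : ∀ l : Fin n, s ≤ (l : ℕ) → xμ l = 0 := by
      intro l hl
      rw [hxμ, Finsupp.add_apply, hμsmall l hl, Finsupp.single_apply]
      have : idx ≠ l := by
        intro h
        subst h
        omega
      rw [if_neg this]
      rfl
    have hxμidx : xμ idx ≠ 0 := by
      rw [hxμ, Finsupp.add_apply, Finsupp.single_apply, if_pos rfl]
      omega
    obtain ⟨g, hgP, hghom, hglm, hg0⟩ := Q_rep hI hγQ hγle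
    have hdegxμ : degOf xμ = r + 1 := by
      rw [hxμ, degOf_add, degOf_single, hdegμ]
    rw [hdegxμ] at hghom
    -- split off the part with big variables
    set bigS := g.support.filter (fun ν => ∃ l : Fin n, s ≤ (l : ℕ) ∧ ν l ≠ 0) with hbigS
    set h' := ∑ m ∈ bigS, monomial m (MvPolynomial.coeff m g) with hh'
    have hcoeffh' : ∀ ν, MvPolynomial.coeff ν h'
        = if ν ∈ bigS then MvPolynomial.coeff ν g else 0 := fun ν => coeff_sum_monomial
    have hh'V : h' ∈ Vspan k n s := by
      rw [mem_Vspan_iff]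
      intro ν hν
      rw [MvPolynomial.mem_support_iff, hcoeffh'] at hν
      by_cases hmem : ν ∈ bigS
      · exact (Finset.mem_filter.mp hmem).2
      · rw [if_neg hmem] at hν
        exact absurd rfl hν
    have hh'hom : h'.IsHomogeneous (r + 1) := by
      rw [hh']
      apply MvPolynomial.IsHomogeneous.sum
      intro m hm
      have : degOf m = r + 1 :=
        isHomog_iff.mp hghom m (Finset.mem_filter.mp hm).1
      exact MvPolynomial.isHomogeneous_monomial _ this
    set g1 := g - h' with hg1
    have hg1hom : g1.IsHomogeneous (r + 1) := homog_sub hghom hh'hom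
    have hcoeffg1 : ∀ ν, MvPolynomial.coeff ν g1
        = if ν ∈ bigS then 0 else MvPolynomial.coeff ν g := by
      intro ν
      rw [hg1, MvPolynomial.coeff_sub, hcoeffh']
      by_cases hmem : ν ∈ bigS
      · rw [if_pos hmem, if_pos hmem, sub_self]
      · rw [if_neg hmem, if_neg hmem, sub_zero]
    have hg1P : g1 ∈ P := Submodule.sub_mem _ hgP (Ideal.mem_sup_right hh'V)
    have hsuppg1 : ∀ ν ∈ g1.support, ν ∈ g.support ∧ ν ∉ bigS := by
      intro ν hν
      rw [MvPolynomial.mem_support_iff, hcoeffg1] at hν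
      by_cases hmem : ν ∈ bigS
      · rw [if_pos hmem] at hν
        exact absurd rfl hν
      · rw [if_neg hmem] at hν
        exact ⟨MvPolynomial.mem_support_iff.mpr hν, hmem⟩
    have hg1span : g1 ∈ Ideal.span {(X idx : MvPolynomial (Fin n) k)} := by
      have : ({(X idx : MvPolynomial (Fin n) k)} : Set _)
          = (fun μ => monomial μ (1 : k)) '' {Finsupp.single idx 1} := by
        rw [Set.image_singleton, X_eq_mono]
      rw [this, MvPolynomial.mem_ideal_span_monomial_image]
      intro ν hν
      obtain ⟨hνg, hνbig⟩ := hsuppg1 ν hν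
      refine ⟨Finsupp.single idx 1, Set.mem_singleton _, Finsupp.single_le_iff.mpr ?_⟩
      have hdegν : degOf ν = degOf xμ := by
        rw [hdegxμ]
        exact isHomog_iff.mp hghom ν hνg
      have := idx_pos_of_not_big hidx hdegν hxμsmall hxμidx (hglm.2 ν hνg)
        (by
          intro hb
          exact hνbig (Finset.mem_filter.mpr ⟨hνg, hb⟩))
      omega
    obtain ⟨h, hgh⟩ := Ideal.mem_span_singleton'.mp hg1span
    -- hgh : h * X idx = g1 ... check orientation below
    have hgh' : g1 = (X idx : MvPolynomial (Fin n) k) * h := by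
      rw [← hgh, mul_comm]
    have hcoeffh : ∀ ν, MvPolynomial.coeff ν h
        = MvPolynomial.coeff (Finsupp.single idx 1 + ν) g1 := by
      intro ν
      rw [hgh', MvPolynomial.coeff_X_mul]
    have hsupph : ∀ ν ∈ h.support, (Finsupp.single idx 1 + ν) ∈ g1.support := by
      intro ν hν
      rw [MvPolynomial.mem_support_iff] at hν ⊢
      rwa [← hcoeffh]
    have hhhom : h.IsHomogeneous r := by
      rw [isHomog_iff]
      intro ν hν
      have := isHomog_iff.mp hg1hom _ (hsupph ν hν)
      rw [degOf_add, degOf_single] at this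
      omega
    have hxμnotbig : xμ ∉ bigS := by
      intro hmem
      obtain ⟨l, hl, h0⟩ := (Finset.mem_filter.mp hmem).2
      exact h0 (hxμsmall l hl)
    have hμsupp : μ ∈ h.support := by
      rw [MvPolynomial.mem_support_iff, hcoeffh]
      have : Finsupp.single idx 1 + μ = xμ := by rw [hxμ, add_comm]
      rw [this, hcoeffg1, if_neg hxμnotbig]
      exact isLM_coeff_ne_zero hglm
    have hhlm : IsLM h μ := by
      refine ⟨hμsupp, ?_⟩
      intro ν hν
      have hmem := hsupph ν hν
      have hmemg : Finsupp.single idx 1 + ν ∈ g.support := (hsuppg1 _ hmem).1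
      rcases hglm.2 _ hmemg with heq | hlt
      · left
        have : Finsupp.single idx 1 + ν = Finsupp.single idx 1 + μ := by
          rw [heq, hxμ, add_comm]
        exact add_left_cancel this
      · right
        have : RevLexLT (Finsupp.single idx 1 + ν) (Finsupp.single idx 1 + μ) := by
          rwa [show Finsupp.single idx 1 + μ = xμ from by rw [hxμ, add_comm]]
        exact revLex_of_add_left _ this
    have hh0 : h ≠ 0 := fun h0 => by
      rw [h0] at hμsupp
      simp at hμsupp
    have hhP : h ∉ P := by
      intro hmem
      exact hμfree (LM_mem_Q hI hmem hhhom hhlm)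
    have hhcolon : h ∈ P.colon (Ideal.span {(X idx : MvPolynomial (Fin n) k)}) := by
      rw [← Ideal.submodule_span_eq, Submodule.mem_colon_span_singleton, smul_eq_mul,
        mul_comm, ← hgh']
      exact hg1P
    exact ⟨h, hhhom, hhcolon, hhP⟩

end Stmt3Aux

namespace Stmt3Aux

variable {k : Type*} [Field k] {n : ℕ}

/-- Small leading monomials. -/
def SL (I : Ideal (MvPolynomial (Fin n) k)) (s : ℕ) : Set (Fin n →₀ ℕ) :=
  {γ ∈ LMset I | ∀ l : Fin n, s ≤ (l : ℕ) → γ l = 0}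

lemma evalZero_monomial_small {i : ℕ} {μ : Fin n →₀ ℕ}
    (h : ∀ l : Fin n, n - i ≤ (l : ℕ) → μ l = 0) :
    evalZero k n i (monomial μ (1 : k)) = monomial μ 1 := by
  rw [evalZero, MvPolynomial.aeval_monomial, map_one, one_mul]
  rw [MvPolynomial.monomial_eq, map_one, one_mul]
  apply Finsupp.prod_congr
  intro l hl
  have hl' : (l : ℕ) < n - i := by
    by_contra hc
    exact (Finsupp.mem_support_iff.mp hl) (h l (by omega))
  rw [if_pos hl']

lemma evalZero_monomial_big {i : ℕ} {μ : Fin n →₀ ℕ}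
    (h : ∃ l : Fin n, n - i ≤ (l : ℕ) ∧ μ l ≠ 0) :
    evalZero k n i (monomial μ (1 : k)) = 0 := by
  obtain ⟨l, hl, hμl⟩ := h
  rw [evalZero, MvPolynomial.aeval_monomial, map_one, one_mul]
  rw [Finsupp.prod]
  apply Finset.prod_eq_zero (Finsupp.mem_support_iff.mpr hμl)
  rw [if_neg (by omega), zero_pow hμl]

lemma evalOne_monomial_small {i : ℕ} {idx : Fin n} (hidx : (idx : ℕ) = n - i - 1)
    {μ : Fin n →₀ ℕ} (h : ∀ l : Fin n, n - i ≤ (l : ℕ) → μ l = 0) :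
    evalOne k n i (monomial μ (1 : k)) = monomial (Finsupp.erase idx μ) 1 := by
  classical
  rw [evalOne, MvPolynomial.aeval_monomial, map_one, one_mul]
  rw [MvPolynomial.monomial_eq, map_one, one_mul]
  rw [Finsupp.prod, Finsupp.prod, Finsupp.support_erase]
  have hfac : ∀ l ∈ μ.support.erase idx,
      (if (l : ℕ) < n - i - 1 then (X l : MvPolynomial (Fin n) k)
        else if (l : ℕ) = n - i - 1 then 1 else 0) ^ μ l
        = (X l : MvPolynomial (Fin n) k) ^ (Finsupp.erase idx μ) l := by
    intro l hl
    obtain ⟨hne, hmem⟩ := Finset.mem_erase.mp hl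
    have h1 : (l : ℕ) < n - i := by
      by_contra hc
      exact (Finsupp.mem_support_iff.mp hmem) (h l (by omega))
    have h2 : (l : ℕ) ≠ n - i - 1 := by
      intro hc
      exact hne (Fin.ext (by omega))
    rw [if_pos (by omega), Finsupp.erase_ne hne]
  by_cases hmem : idx ∈ μ.support
  · rw [← Finset.mul_prod_erase _ _ hmem]
    rw [if_neg (by omega), if_pos hidx, one_pow, one_mul]
    exact Finset.prod_congr rfl hfac
  · rw [Finset.erase_eq_of_notMem hmem]
    apply Finset.prod_congr rfl
    intro l hl
    by_cases hne : l = idx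
    · exact absurd (hne ▸ hl) hmem
    · exact hfac l (Finset.mem_erase.mpr ⟨hne, hl⟩)

lemma evalOne_monomial_big {i : ℕ} {μ : Fin n →₀ ℕ}
    (h : ∃ l : Fin n, n - i ≤ (l : ℕ) ∧ μ l ≠ 0) (hin : i < n) :
    evalOne k n i (monomial μ (1 : k)) = 0 := by
  obtain ⟨l, hl, hμl⟩ := h
  rw [evalOne, MvPolynomial.aeval_monomial, map_one, one_mul]
  rw [Finsupp.prod]
  apply Finset.prod_eq_zero (Finsupp.mem_support_iff.mpr hμl)
  rw [if_neg (by omega), if_neg (by omega), zero_pow hμl]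

lemma Jlow_eq (i : ℕ) (I : Ideal (MvPolynomial (Fin n) k)) :
    Jlow i I = Ideal.span ((fun μ => monomial μ (1 : k)) '' SL I (n - i)) := by
  rw [Jlow, initialIdeal_eq, Ideal.map_span]
  apply le_antisymm
  · rw [Ideal.span_le]
    rintro g ⟨g', ⟨γ, hγ, rfl⟩, rfl⟩
    by_cases hsmall : ∀ l : Fin n, n - i ≤ (l : ℕ) → γ l = 0
    · rw [evalZero_monomial_small hsmall]
      exact Ideal.subset_span ⟨γ, ⟨hγ, hsmall⟩, rfl⟩
    · push_neg at hsmall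
      rw [evalZero_monomial_big (by simpa using hsmall)]
      exact Submodule.zero_mem _
  · rw [Ideal.span_le]
    rintro g ⟨γ, ⟨hγ, hsmall⟩, rfl⟩
    show (monomial γ (1 : k)) ∈ _
    rw [show (monomial γ (1 : k)) = evalZero k n i (monomial γ (1 : k)) from
      (evalZero_monomial_small hsmall).symm]
    exact Ideal.subset_span ⟨monomial γ 1, ⟨γ, hγ, rfl⟩, rfl⟩

lemma Jtil_eq {i : ℕ} {idx : Fin n} (hidx : (idx : ℕ) = n - i - 1) (hin : i < n)
    (I : Ideal (MvPolynomial (Fin n) k)) :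
    Jtil i I = Ideal.span ((fun μ => monomial μ (1 : k)) ''
      (Finsupp.erase idx '' SL I (n - i))) := by
  rw [Jtil, initialIdeal_eq, Ideal.map_span]
  apply le_antisymm
  · rw [Ideal.span_le]
    rintro g ⟨g', ⟨γ, hγ, rfl⟩, rfl⟩
    by_cases hsmall : ∀ l : Fin n, n - i ≤ (l : ℕ) → γ l = 0
    · rw [evalOne_monomial_small hidx hsmall]
      exact Ideal.subset_span ⟨Finsupp.erase idx γ, ⟨γ, ⟨hγ, hsmall⟩, rfl⟩, rfl⟩
    · push_neg at hsmall
      rw [evalOne_monomial_big (by simpa using hsmall) hin]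
      exact Submodule.zero_mem _
  · rw [Ideal.span_le]
    rintro g ⟨γ', ⟨γ, ⟨hγ, hsmall⟩, rfl⟩, rfl⟩
    show (monomial (Finsupp.erase idx γ) (1 : k)) ∈ _
    rw [show (monomial (Finsupp.erase idx γ) (1 : k)) = evalOne k n i (monomial γ (1 : k)) from
      (evalOne_monomial_small hidx hsmall).symm]
    exact Ideal.subset_span ⟨monomial γ 1, ⟨γ, hγ, rfl⟩, rfl⟩

lemma mem_Jlow_iff {i : ℕ} {I : Ideal (MvPolynomial (Fin n) k)} {f : MvPolynomial (Fin n) k} :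
    f ∈ Jlow i I ↔ ∀ ν ∈ f.support, ∃ γ ∈ SL I (n - i), γ ≤ ν := by
  rw [Jlow_eq]
  exact MvPolynomial.mem_ideal_span_monomial_image

lemma mem_Jtil_iff {i : ℕ} {idx : Fin n} (hidx : (idx : ℕ) = n - i - 1) (hin : i < n)
    {I : Ideal (MvPolynomial (Fin n) k)} {f : MvPolynomial (Fin n) k} :
    f ∈ Jtil i I ↔ ∀ ν ∈ f.support, ∃ γ ∈ SL I (n - i), Finsupp.erase idx γ ≤ ν := by
  rw [Jtil_eq hidx hin]
  rw [MvPolynomial.mem_ideal_span_monomial_image]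
  apply forall₂_congr
  intro ν _
  constructor
  · rintro ⟨si, ⟨γ, hγ, rfl⟩, hle⟩
    exact ⟨γ, hγ, hle⟩
  · rintro ⟨γ, hγ, hle⟩
    exact ⟨Finsupp.erase idx γ, ⟨γ, hγ, rfl⟩, hle⟩

lemma mem_supported_iff {s : ℕ} {f : MvPolynomial (Fin n) k} :
    f ∈ MvPolynomial.supported k {j : Fin n | (j : ℕ) < s}
      ↔ ∀ ν ∈ f.support, ∀ l : Fin n, s ≤ (l : ℕ) → ν l = 0 := by
  rw [MvPolynomial.mem_supported]
  constructor
  · intro h ν hν l hl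
    by_contra h0
    have : l ∈ f.vars := (MvPolynomial.mem_vars l).mpr ⟨ν, hν, Finsupp.mem_support_iff.mpr h0⟩
    have := h this
    simp only [Set.mem_setOf_eq] at this
    omega
  · intro h l hl
    obtain ⟨ν, hν, hl'⟩ := (MvPolynomial.mem_vars l).mp hl
    simp only [Set.mem_setOf_eq]
    by_contra hc
    exact (Finsupp.mem_support_iff.mp hl') (h ν hν l (by omega))

end Stmt3Aux

namespace Stmt3Aux

variable {k : Type*} [Field k] {n : ℕ}

lemma psi_iff_N {i : ℕ} {idx : Fin n} (hidx : (idx : ℕ) = n - i - 1) (hin : i < n)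
    {I : Ideal (MvPolynomial (Fin n) k)} (r : ℕ) :
    (∃ f : MvPolynomial (Fin n) k, f ∈ Jtil i I ∧
        f ∈ MvPolynomial.supported k {j : Fin n | (j : ℕ) < n - i} ∧
        f.IsHomogeneous r ∧ f ∉ Jlow i I)
      ↔ ∃ μ : Fin n →₀ ℕ, (∀ l : Fin n, n - i ≤ (l : ℕ) → μ l = 0) ∧ degOf μ = r ∧
          (∃ γ ∈ SL I (n - i), Finsupp.erase idx γ ≤ μ) ∧ ¬ ∃ γ ∈ SL I (n - i), γ ≤ μ := by
  classical
  constructor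
  · rintro ⟨f, hJt, hsup, hhom, hJl⟩
    rw [mem_Jlow_iff] at hJl
    push_neg at hJl
    obtain ⟨μ, hμsupp, hμfree⟩ := hJl
    refine ⟨μ, ?_, isHomog_iff.mp hhom μ hμsupp, ?_, ?_⟩
    · exact fun l hl => mem_supported_iff.mp hsup μ hμsupp l hl
    · exact (mem_Jtil_iff hidx hin).mp hJt μ hμsupp
    · rintro ⟨γ, hγ, hle⟩
      exact hμfree γ hγ hle
  · rintro ⟨μ, hsmall, hdeg, ⟨γ, hγ, hγle⟩, hfree⟩
    have hsuppm : (monomial μ (1 : k)).support = {μ} := by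
      rw [MvPolynomial.support_monomial, if_neg (one_ne_zero (α := k))]
    refine ⟨monomial μ (1 : k), ?_, ?_, ?_, ?_⟩
    · rw [mem_Jtil_iff hidx hin]
      intro ν hν
      rw [hsuppm, Finset.mem_singleton] at hν
      subst hν
      exact ⟨γ, hγ, hγle⟩
    · rw [mem_supported_iff]
      intro ν hν
      rw [hsuppm, Finset.mem_singleton] at hν
      subst hν
      exact hsmall
    · exact MvPolynomial.isHomogeneous_monomial _ hdeg
    · rw [mem_Jlow_iff]
      push_neg
      refine ⟨μ, by rw [hsuppm]; exact Finset.mem_singleton_self μ, ?_⟩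
      intro γ' hγ' hle
      exact hfree ⟨γ', hγ', hle⟩

lemma M_to_N {s : ℕ} {idx : Fin n} (hidx : (idx : ℕ) + 1 = s)
    {I : Ideal (MvPolynomial (Fin n) k)} (r : ℕ)
    (h : ∃ μ : Fin n →₀ ℕ, degOf μ = r ∧
        (∃ γ ∈ Qset I s, γ ≤ μ + Finsupp.single idx 1) ∧ ¬ ∃ γ ∈ Qset I s, γ ≤ μ) :
    ∃ μ : Fin n →₀ ℕ, (∀ l : Fin n, s ≤ (l : ℕ) → μ l = 0) ∧ degOf μ = r ∧
        (∃ γ ∈ SL I s, Finsupp.erase idx γ ≤ μ) ∧ ¬ ∃ γ ∈ SL I s, γ ≤ μ := by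
  obtain ⟨μ, hdeg, ⟨γ, hγQ, hγle⟩, hfree⟩ := h
  have hμsmall : ∀ l : Fin n, s ≤ (l : ℕ) → μ l = 0 := by
    intro l hl
    by_contra h0
    exact hfree ⟨Finsupp.single l 1, Or.inr ⟨l, hl, rfl⟩,
      Finsupp.single_le_iff.mpr (Nat.one_le_iff_ne_zero.mpr h0)⟩
  have hbound : ∀ l : Fin n, γ l ≤ ((μ + Finsupp.single idx 1 : Fin n →₀ ℕ)) l :=
    Finsupp.le_def.mp hγle
  have hγLM : γ ∈ LMset I := by
    rcases hγQ with h | ⟨l, hl, rfl⟩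
    · exact h
    · exfalso
      simp only [Set.mem_setOf_eq] at hl
      have hb := hbound l
      have hne : idx ≠ l := fun h => by
        rw [← h] at hl
        omega
      simp only [Finsupp.add_apply, Finsupp.single_apply] at hb
      rw [if_neg hne, hμsmall l hl] at hb
      simp at hb
  have hγsmall : ∀ l : Fin n, s ≤ (l : ℕ) → γ l = 0 := by
    intro l hl
    have := hbound l
    rw [Finsupp.add_apply, hμsmall l hl, Finsupp.single_apply,
      if_neg (fun h : idx = l => by rw [← h] at hl; omega)] at this
    omega
  refine ⟨μ, hμsmall, hdeg, ⟨γ, ⟨hγLM, hγsmall⟩, Finsupp.le_def.mpr ?_⟩, ?_⟩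
  · intro l
    by_cases hl : l = idx
    · subst hl
      rw [Finsupp.erase_same]
      exact Nat.zero_le _
    · rw [Finsupp.erase_ne hl]
      have := hbound l
      rw [Finsupp.add_apply, Finsupp.single_apply,
        if_neg (fun h : idx = l => hl h.symm), add_zero] at this
      exact this
  · rintro ⟨γ', ⟨hγ'LM, -⟩, hle⟩
    exact hfree ⟨γ', Or.inl hγ'LM, hle⟩

lemma N_to_M {s : ℕ} {idx : Fin n} (hidx : (idx : ℕ) + 1 = s)
    {I : Ideal (MvPolynomial (Fin n) k)} (r : ℕ)
    (h : ∃ μ : Fin n →₀ ℕ, (∀ l : Fin n, s ≤ (l : ℕ) → μ l = 0) ∧ degOf μ = r ∧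
        (∃ γ ∈ SL I s, Finsupp.erase idx γ ≤ μ) ∧ ¬ ∃ γ ∈ SL I s, γ ≤ μ) :
    ∃ r', r ≤ r' ∧ ∃ μ : Fin n →₀ ℕ, degOf μ = r' ∧
        (∃ γ ∈ Qset I s, γ ≤ μ + Finsupp.single idx 1) ∧ ¬ ∃ γ ∈ Qset I s, γ ≤ μ := by
  classical
  obtain ⟨μ, hsmall, hdeg, ⟨γ, ⟨hγLM, hγsmall⟩, hγle⟩, hfree⟩ := h
  have hA : ∃ m : ℕ, ∃ γ' ∈ Qset I s, γ' ≤ μ + Finsupp.single idx m := by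
    refine ⟨γ idx, γ, Or.inl hγLM, Finsupp.le_def.mpr ?_⟩
    intro l
    by_cases hl : l = idx
    · subst hl
      rw [Finsupp.add_apply, Finsupp.single_apply, if_pos rfl]
      omega
    · have := Finsupp.le_def.mp hγle l
      rw [Finsupp.erase_ne hl] at this
      rw [Finsupp.add_apply, Finsupp.single_apply, if_neg (fun h : idx = l => hl h.symm),
        add_zero]
      exact this
  set m₀ := Nat.find hA with hm₀
  have hspec := Nat.find_spec hA
  have h0A : ¬ ∃ γ' ∈ Qset I s, γ' ≤ μ + Finsupp.single idx 0 := by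
    rw [Finsupp.single_zero, add_zero]
    rintro ⟨γ', hγ'Q, hγ'le⟩
    rcases hγ'Q with h | ⟨l, hl, rfl⟩
    · apply hfree
      refine ⟨γ', ⟨h, ?_⟩, hγ'le⟩
      intro l hls
      have := Finsupp.le_def.mp hγ'le l
      rw [hsmall l hls] at this
      omega
    · have := Finsupp.le_def.mp hγ'le l
      rw [Finsupp.single_apply, if_pos rfl, hsmall l hl] at this
      omega
  have hm₀pos : 1 ≤ m₀ := by
    rcases Nat.eq_zero_or_pos m₀ with h0 | h
    · exact absurd (h0 ▸ hspec) h0A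
    · exact h
  refine ⟨r + (m₀ - 1), Nat.le_add_right _ _, μ + Finsupp.single idx (m₀ - 1), ?_, ?_, ?_⟩
  · rw [degOf_add, degOf_single, hdeg]
  · have heq : μ + Finsupp.single idx (m₀ - 1) + Finsupp.single idx 1
        = μ + Finsupp.single idx m₀ := by
      rw [add_assoc, ← Finsupp.single_add]
      congr 1
      congr 1
      omega
    rw [heq]
    exact hspec
  · intro hcon
    have : m₀ - 1 < m₀ := by omega
    exact Nat.find_min hA this hcon

lemma notall_iff {P C : Ideal (MvPolynomial (Fin n) k)} (hle : P ≤ C) (r : ℕ) :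
    (¬ ∀ f : MvPolynomial (Fin n) k, f.IsHomogeneous r → (f ∈ C ↔ f ∈ P))
      ↔ ∃ f : MvPolynomial (Fin n) k, f.IsHomogeneous r ∧ f ∈ C ∧ f ∉ P := by
  constructor
  · intro h
    push_neg at h
    obtain ⟨f, hom, hniff⟩ := h
    rcases hniff with ⟨hC, hP⟩ | ⟨hnC, hP⟩
    · exact ⟨f, hom, hC, hP⟩
    · exact absurd (hle hP) hnC
  · rintro ⟨f, hom, hC, hP⟩ hall
    exact hP ((hall f hom).mp hC)

lemma sSup_natW_eq {Φ Ψ : ℕ → Prop} (h1 : ∀ r, Φ r → Ψ r)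
    (h2 : ∀ r, Ψ r → ∃ r', r ≤ r' ∧ Φ r') :
    sSup {x : WithBot ℕ∞ | ∃ r : ℕ, x = natW r ∧ Φ r}
      = sSup {x : WithBot ℕ∞ | ∃ r : ℕ, x = natW r ∧ Ψ r} := by
  apply le_antisymm
  · apply sSup_le_sSup
    rintro x ⟨r, rfl, h⟩
    exact ⟨r, rfl, h1 r h⟩
  · apply sSup_le
    rintro x ⟨r, rfl, h⟩
    obtain ⟨r', hr, h'⟩ := h2 r h
    refine le_trans ?_ (le_sSup ⟨r', rfl, h'⟩)
    simp only [natW, WithBot.coe_le_coe]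
    exact_mod_cast hr

end Stmt3Aux

/-- Lemma 3.1: for `z = xₙ, …, x_{n-t}` and `i ≤ t`,
`a_z^i(S/I) = c_i(I)`. -/
theorem stmt_3 {k : Type*} [Field k] {n : ℕ} (I : Ideal (MvPolynomial (Fin n) k))
    (hI : HomogIdeal I) (t : ℕ) (ht : t < n) (i : Fin (t + 1)) :
    aInv I (fun j : Fin (t + 1) =>
        (X ⟨n - 1 - (j : ℕ), by omega⟩ : MvPolynomial (Fin n) k)) i
      = cInv (i : ℕ) I := by
  classical
  have hi : (i : ℕ) ≤ t := Nat.lt_succ_iff.mp i.isLt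
  have hin : (i : ℕ) < n := by omega
  set z := fun j : Fin (t + 1) =>
    (X ⟨n - 1 - (j : ℕ), by omega⟩ : MvPolynomial (Fin n) k) with hz
  set idx : Fin n := ⟨n - 1 - (i : ℕ), by omega⟩ with hidx'
  have hidx : (idx : ℕ) + 1 = n - (i : ℕ) := by
    simp only [hidx']
    omega
  have hidx2 : (idx : ℕ) = n - (i : ℕ) - 1 := by
    simp only [hidx']
    omega
  have hzi : z i = X idx := rfl
  have himg : z '' {j : Fin (t + 1) | (j : ℕ) < (i : ℕ)}
      = (fun l => (X l : MvPolynomial (Fin n) k)) '' {l : Fin n | n - (i : ℕ) ≤ (l : ℕ)} := by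
    ext p
    simp only [Set.mem_image, Set.mem_setOf_eq]
    constructor
    · rintro ⟨j, hj, rfl⟩
      exact ⟨⟨n - 1 - (j : ℕ), by omega⟩, by simp; omega, rfl⟩
    · rintro ⟨l, hl, rfl⟩
      have hlt := l.isLt
      refine ⟨⟨n - 1 - (l : ℕ), by omega⟩, by simp; omega, ?_⟩
      rw [hz]
      show (X (⟨n - 1 - (n - 1 - (l : ℕ)), by omega⟩ : Fin n) : MvPolynomial (Fin n) k) = X l
      congr 1
      exact Fin.ext (by simp; omega)
  have hpart : partIdeal I z (i : ℕ) = I ⊔ Stmt3Aux.Vspan k n (n - (i : ℕ)) := by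
    unfold partIdeal Stmt3Aux.Vspan
    rw [himg]
  have hPle : (I ⊔ Stmt3Aux.Vspan k n (n - (i : ℕ)))
      ≤ (I ⊔ Stmt3Aux.Vspan k n (n - (i : ℕ))).colon
          (Ideal.span {(X idx : MvPolynomial (Fin n) k)}) := by
    intro p hp
    rw [← Ideal.submodule_span_eq, Submodule.mem_colon_span_singleton, smul_eq_mul]
    exact Ideal.mul_mem_right _ _ hp
  unfold aInv topDiff cInv
  rw [hzi, hpart]
  apply Stmt3Aux.sSup_natW_eq
  · intro r h
    rw [Stmt3Aux.notall_iff hPle, Stmt3Aux.phi_iff_M hI hidx] at h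
    exact (Stmt3Aux.psi_iff_N hidx2 hin r).mpr (Stmt3Aux.M_to_N hidx r h)
  · intro r h
    obtain ⟨r', hr, hM⟩ := Stmt3Aux.N_to_M hidx r ((Stmt3Aux.psi_iff_N hidx2 hin r).mp h)
    refine ⟨r', hr, ?_⟩
    rw [Stmt3Aux.notall_iff hPle, Stmt3Aux.phi_iff_M hI hidx]
    exact hM
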